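/- Let X_1,…,X_n and Y_1,…,Y_n be real-valued random variables on a common probability space and suppose all the mutual informations below are finite. Define mutual information of two random vectors U, V as I(U;V) = D_KL( law(U,V) ‖ law(U) ⊗ law(V) ) and the directed information as I(X^n → Y^n) = Σ_{i=1}^{n} [ I(X^i ; Y^i) − I(X^i ; Y^{i-1}) ] (with I(X^1; Y^0) = 0), where X^i = (X_1,…,X_i), Y^i = (Y_1,…,Y_i). If f_1,…,f_n and g_1,…,g_n are measurable embeddings of ℝ into ℝ (for instance strictly increasing continuous functions), and X'_i = f_i(X_i), Y'_i = g_i(Y_i), then I(X'^n → Y'^n) = I(X^n → Y^n). In other words, the directed information between the two time series depends only on the copula of the joint distribution of (X^n, Y^n) and not on its marginals. -/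

import Mathlib

open MeasureTheory
open scoped ENNReal

/-- Kullback–Leibler divergence `∫ log (dμ/dν) dμ` for `μ ≪ ν` (with the integrand
`μ`-integrable), and `+∞` otherwise. -/
noncomputable def klDiv {α : Type*} [MeasurableSpace α] (μ ν : Measure α) : ℝ≥0∞ :=
  open scoped Classical in
  if μ ≪ ν ∧ Integrable (fun x => Real.log (μ.rnDeriv ν x).toReal) μ
  then ENNReal.ofReal (∫ x, Real.log (μ.rnDeriv ν x).toReal ∂μ)
  else ⊤

/-- Mutual information of two random vectors,
`I(U;V) = D_KL(law(U,V) ‖ law(U) ⊗ law(V))`. -/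
noncomputable def mutualInfo {Ω α β : Type*} [MeasurableSpace Ω] [MeasurableSpace α]
    [MeasurableSpace β] (P : Measure Ω) (U : Ω → α) (V : Ω → β) : ℝ≥0∞ :=
  klDiv (P.map (fun ω => (U ω, V ω))) ((P.map U).prod (P.map V))

/-- The prefix `X^i = (X_1, …, X_i)` of length `i.val + 1` (including index `i`) of the real
time series `X_1, …, X_n`, where `i : Fin n` represents the paper's index `i = i.val + 1`. -/
def prefIncl {Ω : Type*} {n : ℕ} (X : Fin n → Ω → ℝ) (i : Fin n) : Ω → Fin (i.val + 1) → ℝ :=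
  fun ω j => X (j.castLE i.isLt) ω

/-- The prefix `X^{i-1} = (X_1, …, X_{i-1})` of length `i.val` of the real time series
`X_1, …, X_n`, where `i : Fin n` represents the paper's index `i = i.val + 1`. -/
def prefExcl {Ω : Type*} {n : ℕ} (X : Fin n → Ω → ℝ) (i : Fin n) : Ω → Fin i.val → ℝ :=
  fun ω j => X (j.castLE i.isLt.le) ω

/-- KL divergence is invariant under pushforward by a measurable embedding. -/
lemma klDiv_map_eq {α β : Type*} [MeasurableSpace α] [MeasurableSpace β]
    (μ ν : Measure α) [SigmaFinite μ] [SigmaFinite ν]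
    {φ : α → β} (hφ : MeasurableEmbedding φ) :
    klDiv (μ.map φ) (ν.map φ) = klDiv μ ν := by
  by_cases hac : μ ≪ ν
  · have hae : (fun x => Real.log ((μ.map φ).rnDeriv (ν.map φ) (φ x)).toReal)
        =ᵐ[μ] (fun x => Real.log (μ.rnDeriv ν x).toReal) := by
      filter_upwards [hac.ae_le (hφ.rnDeriv_map μ ν)] with x hx
      rw [hx]
    have hmapac : μ.map φ ≪ ν.map φ := hφ.absolutelyContinuous_map hac
    have hint_iff : Integrable (fun y => Real.log ((μ.map φ).rnDeriv (ν.map φ) y).toReal)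
        (μ.map φ) ↔ Integrable (fun x => Real.log (μ.rnDeriv ν x).toReal) μ := by
      rw [hφ.integrable_map_iff]
      exact integrable_congr hae
    by_cases hI : Integrable (fun x => Real.log (μ.rnDeriv ν x).toReal) μ
    · rw [klDiv, klDiv, if_pos ⟨hmapac, hint_iff.mpr hI⟩, if_pos ⟨hac, hI⟩]
      congr 1
      rw [hφ.integral_map]
      exact integral_congr_ae hae
    · rw [klDiv, klDiv, if_neg (fun h => hI (hint_iff.mp h.2)), if_neg (fun h => hI h.2)]
  · have hmapac : ¬ μ.map φ ≪ ν.map φ := by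
      intro h
      refine hac (fun s hs => ?_)
      have h1 : (ν.map φ) (φ '' s) = 0 := by
        rw [hφ.map_apply, hφ.injective.preimage_image, hs]
      have h2 := h h1
      rwa [hφ.map_apply, hφ.injective.preimage_image] at h2
    rw [klDiv, klDiv, if_neg (fun h => hmapac h.1), if_neg (fun h => hac h.1)]

/-- Mutual information is invariant under injective measurable transformations of the
two random vectors. -/
lemma mutualInfo_comp_eq {Ω α β α' β' : Type*} [MeasurableSpace Ω] [MeasurableSpace α]
    [MeasurableSpace β] [MeasurableSpace α'] [MeasurableSpace β']
    (P : Measure Ω) [IsProbabilityMeasure P]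
    {U : Ω → α} {V : Ω → β} (hU : Measurable U) (hV : Measurable V)
    {φ : α → α'} {ψ : β → β'} (hφ : MeasurableEmbedding φ) (hψ : MeasurableEmbedding ψ) :
    mutualInfo P (fun ω => φ (U ω)) (fun ω => ψ (V ω)) = mutualInfo P U V := by
  have hUV : Measurable fun ω => (U ω, V ω) := hU.prodMk hV
  have hPUV : IsProbabilityMeasure (P.map (fun ω => (U ω, V ω))) :=
    Measure.isProbabilityMeasure_map hUV.aemeasurable
  have hPU : IsProbabilityMeasure (P.map U) := Measure.isProbabilityMeasure_map hU.aemeasurable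
  have hPV : IsProbabilityMeasure (P.map V) := Measure.isProbabilityMeasure_map hV.aemeasurable
  have hembed : MeasurableEmbedding (Prod.map φ ψ) := hφ.prodMap hψ
  have h1 : P.map (fun ω => (φ (U ω), ψ (V ω)))
      = (P.map (fun ω => (U ω, V ω))).map (Prod.map φ ψ) := by
    rw [Measure.map_map hembed.measurable hUV]
    rfl
  have h2 : (P.map (fun ω => φ (U ω))).prod (P.map (fun ω => ψ (V ω)))
      = ((P.map U).prod (P.map V)).map (Prod.map φ ψ) := by
    have hU' : P.map (fun ω => φ (U ω)) = (P.map U).map φ := by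
      rw [Measure.map_map hφ.measurable hU]; rfl
    have hV' : P.map (fun ω => ψ (V ω)) = (P.map V).map ψ := by
      rw [Measure.map_map hψ.measurable hV]; rfl
    rw [hU', hV', Measure.map_prod_map _ _ hφ.measurable hψ.measurable]
  rw [mutualInfo, mutualInfo, h1, h2, klDiv_map_eq _ _ hembed]

/-- Coordinatewise application of measurable embeddings of `ℝ` is a measurable embedding
of `Fin m → ℝ`. -/
lemma measurableEmbedding_piMap {m : ℕ} (h : Fin m → ℝ → ℝ)
    (hh : ∀ j, MeasurableEmbedding (h j)) :
    MeasurableEmbedding (fun x : Fin m → ℝ => fun j => h j (x j)) := by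
  refine Measurable.measurableEmbedding ?_ ?_
  · exact measurable_pi_lambda _ fun j => (hh j).measurable.comp (measurable_pi_apply j)
  · intro x y hxy
    funext j
    exact (hh j).injective (congrFun hxy j)

lemma measurable_prefIncl {Ω : Type*} [MeasurableSpace Ω] {n : ℕ} {X : Fin n → Ω → ℝ}
    (hX : ∀ i, Measurable (X i)) (i : Fin n) : Measurable (prefIncl X i) :=
  measurable_pi_lambda _ fun j => hX _

lemma measurable_prefExcl {Ω : Type*} [MeasurableSpace Ω] {n : ℕ} {X : Fin n → Ω → ℝ}
    (hX : ∀ i, Measurable (X i)) (i : Fin n) : Measurable (prefExcl X i) :=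
  measurable_pi_lambda _ fun j => hX _

/-- **Copula formulation of causal discovery** (Theorem 1 of the paper): the directed
information `I(X^n → Y^n) = Σᵢ [I(X^i ; Y^i) − I(X^i ; Y^{i-1})]` is invariant under
coordinatewise injective measurable transformations `X'_i = f_i(X_i)`, `Y'_i = g_i(Y_i)` of
the marginals (all mutual informations below being assumed finite); hence it depends only
on the copula of the joint distribution of `(X^n, Y^n)` and not on its marginals. -/
theorem directedInfo_comp_measurableEmbedding
    {Ω : Type*} [MeasurableSpace Ω] (P : Measure Ω) [IsProbabilityMeasure P]
    {n : ℕ} (X Y : Fin n → Ω → ℝ)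
    (hX : ∀ i, Measurable (X i)) (hY : ∀ i, Measurable (Y i))
    (f g : Fin n → ℝ → ℝ)
    (hf : ∀ i, MeasurableEmbedding (f i)) (hg : ∀ i, MeasurableEmbedding (g i))
    (hfin : ∀ i : Fin n,
      mutualInfo P (prefIncl X i) (prefIncl Y i) ≠ ⊤ ∧
      mutualInfo P (prefIncl X i) (prefExcl Y i) ≠ ⊤ ∧
      mutualInfo P (prefIncl (fun k ω => f k (X k ω)) i)
        (prefIncl (fun k ω => g k (Y k ω)) i) ≠ ⊤ ∧
      mutualInfo P (prefIncl (fun k ω => f k (X k ω)) i)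
        (prefExcl (fun k ω => g k (Y k ω)) i) ≠ ⊤) :
    ∑ i : Fin n,
        ((mutualInfo P (prefIncl (fun k ω => f k (X k ω)) i)
            (prefIncl (fun k ω => g k (Y k ω)) i)).toReal
          - (mutualInfo P (prefIncl (fun k ω => f k (X k ω)) i)
              (prefExcl (fun k ω => g k (Y k ω)) i)).toReal)
      = ∑ i : Fin n,
          ((mutualInfo P (prefIncl X i) (prefIncl Y i)).toReal
            - (mutualInfo P (prefIncl X i) (prefExcl Y i)).toReal) := by
  refine Finset.sum_congr rfl fun i _ => ?_
  have hXe := measurableEmbedding_piMap (fun j : Fin (i.val + 1) => f (j.castLE i.isLt))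
    (fun j => hf _)
  have hYe := measurableEmbedding_piMap (fun j : Fin (i.val + 1) => g (j.castLE i.isLt))
    (fun j => hg _)
  have hYe' := measurableEmbedding_piMap (fun j : Fin i.val => g (j.castLE i.isLt.le))
    (fun j => hg _)
  have hXc : prefIncl (fun k ω => f k (X k ω)) i
      = fun ω => (fun x : Fin (i.val + 1) → ℝ => fun j => f (j.castLE i.isLt) (x j))
          (prefIncl X i ω) := rfl
  have hYc : prefIncl (fun k ω => g k (Y k ω)) i
      = fun ω => (fun x : Fin (i.val + 1) → ℝ => fun j => g (j.castLE i.isLt) (x j))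
          (prefIncl Y i ω) := rfl
  have hYc' : prefExcl (fun k ω => g k (Y k ω)) i
      = fun ω => (fun x : Fin i.val → ℝ => fun j => g (j.castLE i.isLt.le) (x j))
          (prefExcl Y i ω) := rfl
  rw [hXc, hYc, hYc',
    mutualInfo_comp_eq P (measurable_prefIncl hX i) (measurable_prefIncl hY i) hXe hYe,
    mutualInfo_comp_eq P (measurable_prefIncl hX i) (measurable_prefExcl hY i) hXe hYe']
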